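/- If g belongs to the Marcinkiewicz space M^s(Ω) with 1 < s < ∞, then the pseudo-rearrangement D of g with respect to a measurable function v belongs to M^s(0,|Ω|); more precisely its decreasing rearrangement satisfies D̄(t) ≤ (1/t)∫₀ᵗ ḡ ≤ ‖g‖_{M^s} · (s/(s−1)) · t^{−1/s}. -/

import Mathlib

open MeasureTheory Set

/-- Decreasing rearrangement of a function on `Ω ⊂ ℝ^N`. -/
noncomputable def rearr {N : ℕ} (Ω : Set (EuclideanSpace ℝ (Fin N)))
    (g : EuclideanSpace ℝ (Fin N) → ℝ) (s : ℝ) : ℝ :=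
  sInf {t : ℝ | 0 ≤ t ∧ (volume {x ∈ Ω | |g x| > t}).toReal < s}

/-- Decreasing rearrangement of a function on `(0,M) ⊂ ℝ`. -/
noncomputable def rearr1 (M : ℝ) (D : ℝ → ℝ) (t : ℝ) : ℝ :=
  sInf {τ : ℝ | 0 ≤ τ ∧ (volume {s ∈ Ioo (0 : ℝ) M | |D s| > τ}).toReal < t}

open scoped ENNReal NNReal

section aux
variable {N : ℕ} {Ω : Set (EuclideanSpace ℝ (Fin N))} {g : EuclideanSpace ℝ (Fin N) → ℝ}
  {a b : ℝ}

lemma rearr_nonneg (Ω : Set (EuclideanSpace ℝ (Fin N))) (g : EuclideanSpace ℝ (Fin N) → ℝ)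
    (τ : ℝ) : 0 ≤ rearr Ω g τ :=
  Real.sInf_nonneg fun _ hx => hx.1

lemma rearrSet_bddBelow (τ : ℝ) :
    BddBelow {t : ℝ | 0 ≤ t ∧ (volume {x ∈ Ω | |g x| > t}).toReal < τ} :=
  ⟨0, fun _ hx => hx.1⟩

lemma distrib_meas (hΩm : MeasurableSet Ω) (hg : Measurable g) (t : ℝ) :
    MeasurableSet {x ∈ Ω | |g x| > t} :=
  hΩm.inter (measurableSet_lt measurable_const hg.abs)

lemma distrib_mono (hab : a ≤ b) :
    volume {x ∈ Ω | |g x| > b} ≤ volume {x ∈ Ω | |g x| > a} :=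
  measure_mono fun x hx => ⟨hx.1, lt_of_le_of_lt hab hx.2⟩

lemma distrib_ne_top (hΩf : volume Ω ≠ ⊤) (t : ℝ) :
    volume {x ∈ Ω | |g x| > t} ≠ ⊤ :=
  ne_top_of_le_ne_top hΩf (measure_mono fun x hx => hx.1)

lemma rearrSet_nonempty (hΩm : MeasurableSet Ω) (hg : Measurable g) (hΩf : volume Ω ≠ ⊤)
    {τ : ℝ} (hτ : 0 < τ) :
    Set.Nonempty {t : ℝ | 0 ≤ t ∧ (volume {x ∈ Ω | |g x| > t}).toReal < τ} := by
  have hinter : (⋂ n : ℕ, {x ∈ Ω | |g x| > (n : ℝ)}) = ∅ := by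
    ext x
    simp only [mem_iInter, mem_setOf_eq, mem_empty_iff_false, iff_false, not_forall]
    obtain ⟨n, hn⟩ := exists_nat_gt (|g x|)
    exact ⟨n, fun h => absurd h.2 (not_lt.2 hn.le)⟩
  have hanti : Antitone (fun n : ℕ => {x ∈ Ω | |g x| > (n : ℝ)}) := fun m n hmn x hx =>
    ⟨hx.1, lt_of_le_of_lt (by exact_mod_cast hmn) hx.2⟩
  have htend := tendsto_measure_iInter_atTop
    (μ := volume) (s := fun n : ℕ => {x ∈ Ω | |g x| > (n : ℝ)})
    (fun n => (distrib_meas hΩm hg _).nullMeasurableSet) hanti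
    ⟨0, distrib_ne_top hΩf _⟩
  rw [hinter, measure_empty] at htend
  have := htend.eventually (gt_mem_nhds (show (0:ℝ≥0∞) < ENNReal.ofReal τ by
    simpa using hτ))
  obtain ⟨n, hn⟩ := this.exists
  refine ⟨n, Nat.cast_nonneg n, ?_⟩
  have := ENNReal.toReal_lt_toReal (distrib_ne_top hΩf _) ENNReal.ofReal_ne_top |>.mpr hn
  rwa [ENNReal.toReal_ofReal hτ.le] at this

/-- If `rearr Ω g τ > λ ≥ 0` then the distribution at `λ` is at least `τ`. -/
lemma le_distrib_of_lt_rearr (hlam : 0 ≤ lam) (h : lam < rearr Ω g τ) :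
    τ ≤ (volume {x ∈ Ω | |g x| > lam}).toReal := by
  by_contra hc
  exact absurd (csInf_le (rearrSet_bddBelow τ) ⟨hlam, not_le.1 hc⟩) (not_le.2 h)

/-- Right continuity consequence: if `τ < distrib lam` then `lam < rearr Ω g τ`. -/
lemma lt_rearr_of_lt_distrib (hΩm : MeasurableSet Ω) (hg : Measurable g) (hΩf : volume Ω ≠ ⊤)
    {τ lam : ℝ} (hτ : 0 < τ) (h : τ < (volume {x ∈ Ω | |g x| > lam}).toReal) :
    lam < rearr Ω g τ := by
  by_contra hc
  push_neg at hc
  -- from sInf ≤ lam, for every ε > 0 there is a member < lam + ε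
  have hmem : ∀ ε : ℝ, 0 < ε → (volume {x ∈ Ω | |g x| > lam + ε}).toReal < τ := by
    intro ε hε
    obtain ⟨u, hu, hult⟩ := (Real.sInf_le_iff (rearrSet_bddBelow τ)
      (rearrSet_nonempty hΩm hg hΩf hτ)).1 hc ε hε
    calc (volume {x ∈ Ω | |g x| > lam + ε}).toReal
        ≤ (volume {x ∈ Ω | |g x| > u}).toReal := by
          exact ENNReal.toReal_le_toReal (distrib_ne_top hΩf _) (distrib_ne_top hΩf _) |>.2
            (distrib_mono hult.le)
      _ < τ := hu.2
  -- right continuity along the sequence lam + 1/(n+1)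
  have hmonos : Monotone (fun n : ℕ => {x ∈ Ω | |g x| > lam + 1 / (n + 1)}) := by
    intro m n hmn x hx
    have hcast : (m : ℝ) + 1 ≤ (n : ℝ) + 1 := by exact_mod_cast Nat.succ_le_succ hmn
    refine ⟨hx.1, lt_of_le_of_lt (by
      have := one_div_le_one_div_of_le (by positivity : (0:ℝ) < (m:ℝ) + 1) hcast
      linarith) hx.2⟩
  have hunion : (⋃ n : ℕ, {x ∈ Ω | |g x| > lam + 1 / (n + 1)}) = {x ∈ Ω | |g x| > lam} := by
    ext x
    simp only [mem_iUnion, mem_setOf_eq]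
    constructor
    · rintro ⟨n, h1, h2⟩
      exact ⟨h1, lt_of_le_of_lt (le_add_of_nonneg_right (by positivity)) h2⟩
    · rintro ⟨h1, h2⟩
      obtain ⟨n, hn⟩ := exists_nat_one_div_lt (sub_pos.2 h2)
      exact ⟨n, h1, by linarith⟩
  have htend := tendsto_measure_iUnion_atTop
    (μ := volume) (s := fun n : ℕ => {x ∈ Ω | |g x| > lam + 1 / (n + 1)}) hmonos
  rw [hunion] at htend
  have htoReal := (ENNReal.tendsto_toReal (distrib_ne_top hΩf lam)).comp htend
  have hle := le_of_tendsto htoReal (Filter.Eventually.of_forall fun n =>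
    (hmem (1 / (n + 1)) (by positivity)).le)
  exact absurd h (not_lt.2 hle)
lemma rearr_eq_zero_of_nonpos (h : τ ≤ 0) : rearr Ω g τ = 0 := by
  have : {t : ℝ | 0 ≤ t ∧ (volume {x ∈ Ω | |g x| > t}).toReal < τ} = ∅ := by
    ext u
    simp only [mem_setOf_eq, mem_empty_iff_false, iff_false, not_and, not_lt]
    exact fun _ => le_trans h ENNReal.toReal_nonneg
  rw [rearr, this, Real.sInf_empty]

lemma rearr_antitoneOn (hΩm : MeasurableSet Ω) (hg : Measurable g) (hΩf : volume Ω ≠ ⊤) :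
    AntitoneOn (rearr Ω g) (Ioi (0:ℝ)) := by
  intro τ₁ h₁ τ₂ h₂ h12
  exact csInf_le_csInf (rearrSet_bddBelow τ₂) (rearrSet_nonempty hΩm hg hΩf h₁)
    (fun u hu => ⟨hu.1, lt_of_lt_of_le hu.2 h12⟩)

lemma rearr_measurable (hΩm : MeasurableSet Ω) (hg : Measurable g) (hΩf : volume Ω ≠ ⊤) :
    Measurable (rearr Ω g) := by
  apply measurable_of_Iio
  intro c
  have : rearr Ω g ⁻¹' Iio c =
      ({τ : ℝ | τ ≤ 0} ∩ {τ | (0:ℝ) < c}) ∪ ({τ | 0 < τ} ∩ {τ | rearr Ω g τ < c}) := by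
    ext τ
    simp only [mem_preimage, mem_Iio, mem_union, mem_inter_iff, mem_setOf_eq]
    rcases le_or_gt τ 0 with h | h
    · simp [rearr_eq_zero_of_nonpos h, h, not_lt.2 h]
    · simp [h, not_le.2 h]
  rw [this]
  apply MeasurableSet.union
  · by_cases hc : 0 < c
    · have : ({τ : ℝ | τ ≤ 0} ∩ {τ | (0:ℝ) < c}) = Iic (0:ℝ) := by
        ext u; simp [hc]
      rw [this]; exact measurableSet_Iic
    · simp [hc]
  · have hOC : Set.OrdConnected ({τ : ℝ | 0 < τ} ∩ {τ | rearr Ω g τ < c}) := by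
      constructor
      rintro x ⟨hx0, hxc⟩ y ⟨hy0, hyc⟩ z hz
      have hz0 : 0 < z := lt_of_lt_of_le hx0 hz.1
      exact ⟨hz0, lt_of_le_of_lt (rearr_antitoneOn hΩm hg hΩf hx0 hz0 hz.1) hxc⟩
    exact hOC.measurableSet

lemma rearr_le_K {s K : ℝ} (hs : 1 < s) (hK : 0 ≤ K)
    (hMarc : ∀ t > (0 : ℝ), t ^ (1 / s) * rearr Ω g t ≤ K) {τ : ℝ} (hτ : 0 < τ) :
    rearr Ω g τ ≤ K * τ ^ (-(1 / s)) := by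
  have hp : (0:ℝ) < τ ^ (1 / s) := Real.rpow_pos_of_pos hτ _
  have := hMarc τ hτ
  rw [Real.rpow_neg hτ.le]
  calc rearr Ω g τ = τ ^ (1/s) * rearr Ω g τ * (τ ^ (1/s))⁻¹ := by
        field_simp
    _ ≤ K * (τ ^ (1/s))⁻¹ := mul_le_mul_of_nonneg_right this (by positivity)

lemma rearr_integrableOn {s K : ℝ} (hΩm : MeasurableSet Ω) (hg : Measurable g)
    (hΩf : volume Ω ≠ ⊤) (hs : 1 < s) (hK : 0 ≤ K)
    (hMarc : ∀ t > (0 : ℝ), t ^ (1 / s) * rearr Ω g t ≤ K) (b : ℝ) :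
    IntegrableOn (rearr Ω g) (Ioc 0 b) := by
  have hrpow : IntervalIntegrable (fun x : ℝ => x ^ (-(1/s))) volume 0 b := by
    apply intervalIntegral.intervalIntegrable_rpow'
    have : 1 / s < 1 := by
      rw [div_lt_one (by linarith)]; linarith
    linarith
  have hKi : IntegrableOn (fun τ : ℝ => K * τ ^ (-(1/s))) (Ioc 0 b) := by
    rcases le_or_gt b 0 with hb | hb
    · rw [Ioc_eq_empty (by exact not_lt.2 hb)]
      simp [IntegrableOn]
    · exact (hrpow.const_mul K).1
  apply Integrable.mono' hKi ((rearr_measurable hΩm hg hΩf).aestronglyMeasurable.restrict)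
  rw [ae_restrict_iff' measurableSet_Ioc]
  refine Filter.Eventually.of_forall fun τ hτ => ?_
  rw [Real.norm_eq_abs, abs_of_nonneg (rearr_nonneg Ω g τ)]
  exact rearr_le_K hs hK hMarc hτ.1
lemma distrib_rearr_eq {σ' lam : ℝ} (hΩm : MeasurableSet Ω) (hg : Measurable g)
    (hΩf : volume Ω ≠ ⊤) (hσ' : 0 ≤ σ') (hlam : 0 < lam) :
    volume {τ | τ ∈ Ioo (0:ℝ) σ' ∧ lam < rearr Ω g τ}
      = min (ENNReal.ofReal σ') (volume {x ∈ Ω | |g x| > lam}) := by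
  set r := (volume {x ∈ Ω | |g x| > lam}).toReal with hr
  have hrof : volume {x ∈ Ω | |g x| > lam} = ENNReal.ofReal r :=
    (ENNReal.ofReal_toReal (distrib_ne_top hΩf lam)).symm
  have sub1 : Ioo 0 (min σ' r) ⊆ {τ | τ ∈ Ioo (0:ℝ) σ' ∧ lam < rearr Ω g τ} := by
    rintro τ ⟨h0, hm⟩
    exact ⟨⟨h0, lt_of_lt_of_le hm (min_le_left _ _)⟩,
      lt_rearr_of_lt_distrib hΩm hg hΩf h0 (lt_of_lt_of_le hm (min_le_right _ _))⟩
  have sub2 : {τ | τ ∈ Ioo (0:ℝ) σ' ∧ lam < rearr Ω g τ} ⊆ Ioc 0 (min σ' r) := by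
    rintro τ ⟨⟨h0, hσ⟩, hlt⟩
    exact ⟨h0, le_min hσ.le (le_distrib_of_lt_rearr hlam.le hlt)⟩
  have h1 := measure_mono (μ := (volume : Measure ℝ)) sub1
  have h2 := measure_mono (μ := (volume : Measure ℝ)) sub2
  rw [Real.volume_Ioo, sub_zero] at h1
  rw [Real.volume_Ioc, sub_zero] at h2
  have : volume {τ | τ ∈ Ioo (0:ℝ) σ' ∧ lam < rearr Ω g τ} = ENNReal.ofReal (min σ' r) :=
    le_antisymm h2 h1
  rw [this, hrof]
  rcases le_total σ' r with h | h
  · rw [min_eq_left h, min_eq_left (ENNReal.ofReal_le_ofReal h)]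
  · rw [min_eq_right h, min_eq_right (ENNReal.ofReal_le_ofReal h)]

lemma HL {s K : ℝ} (hΩm : MeasurableSet Ω) (hg : Measurable g) (hΩf : volume Ω ≠ ⊤)
    (hs : 1 < s) (hK : 0 ≤ K)
    (hMarc : ∀ t > (0 : ℝ), t ^ (1 / s) * rearr Ω g t ≤ K)
    {S : Set (EuclideanSpace ℝ (Fin N))} (hSm : MeasurableSet S) (hSΩ : S ⊆ Ω) :
    ∫⁻ x in S, ENNReal.ofReal |g x| ∂volume ≤
      ENNReal.ofReal (∫ τ in (0:ℝ)..((volume S).toReal), rearr Ω g τ) := by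
  set σ' := (volume S).toReal with hσ'
  have hSf : volume S ≠ ⊤ := ne_top_of_le_ne_top hΩf (measure_mono hSΩ)
  have hσ'0 : 0 ≤ σ' := ENNReal.toReal_nonneg
  have hvolS : volume S = ENNReal.ofReal σ' := (ENNReal.ofReal_toReal hSf).symm
  -- layer cake for the left side
  have step1 : ∫⁻ x in S, ENNReal.ofReal |g x| ∂volume
      = ∫⁻ lam in Ioi (0:ℝ), (volume.restrict S) {x | lam < |g x|} :=
    lintegral_eq_lintegral_meas_lt (volume.restrict S)
      (Filter.Eventually.of_forall fun x => abs_nonneg _) hg.abs.aemeasurable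
  -- layer cake for the right side
  have hrint : IntegrableOn (rearr Ω g) (Ioo 0 σ') :=
    (rearr_integrableOn hΩm hg hΩf hs hK hMarc σ').mono_set Ioo_subset_Ioc_self
  have step4 : ENNReal.ofReal (∫ τ in (0:ℝ)..σ', rearr Ω g τ)
      = ∫⁻ τ in Ioo 0 σ', ENNReal.ofReal (rearr Ω g τ) := by
    rw [intervalIntegral.integral_of_le hσ'0, integral_Ioc_eq_integral_Ioo]
    exact ofReal_integral_eq_lintegral_ofReal hrint
      (Filter.Eventually.of_forall fun τ => rearr_nonneg Ω g τ)
  have step3 : ∫⁻ τ in Ioo 0 σ', ENNReal.ofReal (rearr Ω g τ)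
      = ∫⁻ lam in Ioi (0:ℝ), volume {τ | τ ∈ Ioo (0:ℝ) σ' ∧ lam < rearr Ω g τ} := by
    rw [lintegral_eq_lintegral_meas_lt (volume.restrict (Ioo 0 σ'))
      (Filter.Eventually.of_forall fun τ => rearr_nonneg Ω g τ)
      (rearr_measurable hΩm hg hΩf).aemeasurable]
    apply lintegral_congr_ae
    refine Filter.Eventually.of_forall fun lam => ?_
    show (volume.restrict (Ioo 0 σ')) {τ | lam < rearr Ω g τ} = _
    rw [Measure.restrict_apply (measurableSet_lt measurable_const
      (rearr_measurable hΩm hg hΩf))]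
    congr 1
    ext τ
    simp only [mem_inter_iff, mem_setOf_eq]
    tauto
  rw [step1, step4, step3]
  apply lintegral_mono_ae
  rw [ae_restrict_iff' measurableSet_Ioi]
  refine Filter.Eventually.of_forall fun lam hlam => ?_
  rw [distrib_rearr_eq hΩm hg hΩf hσ'0 hlam]
  rw [Measure.restrict_apply (measurableSet_lt measurable_const hg.abs)]
  apply le_min
  · rw [← hvolS]; exact measure_mono inter_subset_right
  · apply measure_mono
    rintro x ⟨hx1, hx2⟩
    exact ⟨hSΩ hx2, hx1⟩

lemma abs_g_integrableOn {s K : ℝ} (hΩm : MeasurableSet Ω) (hg : Measurable g)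
    (hΩf : volume Ω ≠ ⊤) (hs : 1 < s) (hK : 0 ≤ K)
    (hMarc : ∀ t > (0 : ℝ), t ^ (1 / s) * rearr Ω g t ≤ K) :
    IntegrableOn (fun x => |g x|) Ω := by
  refine ⟨hg.abs.aestronglyMeasurable.restrict, ?_⟩
  rw [hasFiniteIntegral_iff_ofReal (Filter.Eventually.of_forall fun x => abs_nonneg _)]
  exact lt_of_le_of_lt (HL hΩm hg hΩf hs hK hMarc hΩm (subset_refl Ω)) ENNReal.ofReal_lt_top
noncomputable def phi {N : ℕ} (F : ℝ → Set (EuclideanSpace ℝ (Fin N))) (M : ℝ)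
    (x : EuclideanSpace ℝ (Fin N)) : ℝ :=
  sInf ({σ : ℝ | x ∈ F σ ∧ 0 ≤ σ} ∪ {M + 1})

section phi
variable {F : ℝ → Set (EuclideanSpace ℝ (Fin N))} {M : ℝ} {x : EuclideanSpace ℝ (Fin N)}

lemma phiSet_nonempty : ({σ : ℝ | x ∈ F σ ∧ 0 ≤ σ} ∪ {M + 1}).Nonempty :=
  ⟨M + 1, Or.inr rfl⟩

lemma phiSet_bddBelow (hM : 0 ≤ M) :
    BddBelow ({σ : ℝ | x ∈ F σ ∧ 0 ≤ σ} ∪ {M + 1}) := by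
  refine ⟨0, ?_⟩
  rintro σ (⟨_, h⟩ | rfl)
  · exact h
  · linarith

lemma phi_nonneg (hM : 0 ≤ M) : 0 ≤ phi F M x := by
  apply le_csInf phiSet_nonempty
  rintro σ (⟨_, h⟩ | rfl)
  · exact h
  · linarith

lemma F_mono_le (hFmono : ∀ σ₁ σ₂ : ℝ, σ₁ < σ₂ → F σ₁ ⊆ F σ₂) {a b : ℝ} (h : a ≤ b) :
    F a ⊆ F b := by
  rcases eq_or_lt_of_le h with rfl | h
  · exact subset_rfl
  · exact hFmono _ _ h

lemma mem_F_of_phi_lt (hFmono : ∀ σ₁ σ₂ : ℝ, σ₁ < σ₂ → F σ₁ ⊆ F σ₂) (hM : 0 ≤ M)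
    (hx : x ∈ F (M + 1)) {σ : ℝ} (h : phi F M x < σ) : x ∈ F σ := by
  obtain ⟨a, ha, halt⟩ := exists_lt_of_csInf_lt phiSet_nonempty h
  rcases ha with ⟨haF, _⟩ | rfl
  · exact hFmono _ _ halt haF
  · exact hFmono _ _ halt hx

lemma phi_le_of_mem (hM : 0 ≤ M) {b : ℝ} (hb : 0 ≤ b)
    (h : ∀ n : ℕ, x ∈ F (b + 1 / (n + 1))) : phi F M x ≤ b := by
  apply le_of_forall_pos_le_add
  intro ε hε
  obtain ⟨n, hn⟩ := exists_nat_one_div_lt hε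
  calc phi F M x ≤ b + 1 / (n + 1) :=
        csInf_le (phiSet_bddBelow hM) (Or.inl ⟨h n, by positivity⟩)
    _ ≤ b + ε := by linarith

lemma measurable_phi (hFmeas : ∀ σ : ℝ, MeasurableSet (F σ))
    (hFmono : ∀ σ₁ σ₂ : ℝ, σ₁ < σ₂ → F σ₁ ⊆ F σ₂) (hM : 0 ≤ M) :
    Measurable (phi F M) := by
  apply measurable_of_Iio
  intro c
  have hset : phi F M ⁻¹' Iio c =
      {x : EuclideanSpace ℝ (Fin N) | M + 1 < c} ∪
        ⋃ q : ℚ, {x | 0 ≤ (q : ℝ) ∧ (q : ℝ) < c ∧ x ∈ F q} := by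
    ext x
    simp only [mem_preimage, mem_Iio, mem_union, mem_setOf_eq, mem_iUnion]
    constructor
    · intro h
      obtain ⟨a, ha, halt⟩ := exists_lt_of_csInf_lt phiSet_nonempty h
      rcases ha with ⟨haF, ha0⟩ | rfl
      · obtain ⟨q, hq1, hq2⟩ := exists_rat_btwn halt
        exact Or.inr ⟨q, by linarith, hq2, hFmono _ _ hq1 haF⟩
      · exact Or.inl halt
    · rintro (h | ⟨q, hq0, hqc, hqF⟩)
      · exact lt_of_le_of_lt (csInf_le (phiSet_bddBelow hM) (Or.inr rfl)) h
      · exact lt_of_le_of_lt (csInf_le (phiSet_bddBelow hM) (Or.inl ⟨hqF, hq0⟩)) hqc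
  rw [hset]
  apply MeasurableSet.union
  · by_cases h : M + 1 < c
    · simp only [h, setOf_true]; exact MeasurableSet.univ
    · simp only [h, setOf_false]; exact MeasurableSet.empty
  · apply MeasurableSet.iUnion
    intro q
    by_cases h : 0 ≤ (q : ℝ) ∧ (q : ℝ) < c
    · have : {x : EuclideanSpace ℝ (Fin N) | 0 ≤ (q : ℝ) ∧ (q : ℝ) < c ∧ x ∈ F q} = F q := by
        ext x; simp [h.1, h.2]
      rw [this]; exact hFmeas q
    · have : {x : EuclideanSpace ℝ (Fin N) | 0 ≤ (q : ℝ) ∧ (q : ℝ) < c ∧ x ∈ F q} = ∅ := by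
        ext x
        simp only [mem_setOf_eq, mem_empty_iff_false, iff_false]
        intro hx
        exact h ⟨hx.1, hx.2.1⟩
      rw [this]; exact MeasurableSet.empty

/-- The key limit computation of `m (phi ⁻¹' Iic b)` for a finite measure vanishing
outside of the good set. -/
lemma m_phi_Iic (m : Measure (EuclideanSpace ℝ (Fin N))) [IsFiniteMeasure m]
    (hFmeas : ∀ σ : ℝ, MeasurableSet (F σ)) (hFsub : ∀ σ, F σ ⊆ Ω)
    (hFmono : ∀ σ₁ σ₂ : ℝ, σ₁ < σ₂ → F σ₁ ⊆ F σ₂) (hM : 0 ≤ M)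
    (hmΩc : m Ωᶜ = 0) (hm0 : m (F 0) = 0) (hm1 : m (Ω \ F (M + 1)) = 0) {b : ℝ} (hb : 0 ≤ b) :
    Filter.Tendsto (fun n : ℕ => m (F (b + 1 / (n + 1)))) Filter.atTop
      (nhds (m (phi F M ⁻¹' Iic b))) := by
  set Good := F (M + 1) \ F 0 with hGood
  have hGoodc : m Goodᶜ = 0 := by
    have hsub : Goodᶜ ⊆ Ωᶜ ∪ (Ω \ F (M + 1)) ∪ F 0 := by
      intro x hx
      rw [hGood, mem_compl_iff, mem_diff, not_and_or, not_not] at hx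
      rcases hx with hx | hx
      · by_cases hxΩ : x ∈ Ω
        · exact Or.inl (Or.inr ⟨hxΩ, hx⟩)
        · exact Or.inl (Or.inl hxΩ)
      · exact Or.inr hx
    have h1 : m Goodᶜ ≤ m (Ωᶜ ∪ (Ω \ F (M + 1))) + m (F 0) :=
      le_trans (measure_mono hsub) (measure_union_le _ _)
    have h2 : m (Ωᶜ ∪ (Ω \ F (M + 1))) ≤ m Ωᶜ + m (Ω \ F (M + 1)) := measure_union_le _ _
    rw [hmΩc, hm1, add_zero] at h2
    rw [hm0, add_zero] at h1
    exact le_antisymm (h1.trans h2) zero_le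
  have hinter_good : ∀ A : Set (EuclideanSpace ℝ (Fin N)), m A = m (A ∩ Good) := by
    intro A
    refine le_antisymm ?_ (measure_mono inter_subset_left)
    calc m A ≤ m (A ∩ Good) + m (A \ Good) := measure_le_inter_add_diff m A Good
      _ ≤ m (A ∩ Good) + m Goodᶜ := by
          gcongr
          exact fun x hx => hx.2
      _ = m (A ∩ Good) := by rw [hGoodc, add_zero]
  have hkey : phi F M ⁻¹' Iic b ∩ Good = (⋂ n : ℕ, F (b + 1 / (n + 1))) ∩ Good := by
    ext x
    simp only [mem_inter_iff, mem_preimage, mem_Iic, mem_iInter]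
    constructor
    · rintro ⟨hphi, hxG⟩
      refine ⟨fun n => mem_F_of_phi_lt hFmono hM hxG.1 ?_, hxG⟩
      have : (0:ℝ) < 1 / (n + 1) := by positivity
      linarith
    · rintro ⟨hmem, hxG⟩
      exact ⟨phi_le_of_mem hM hb hmem, hxG⟩
  have htendsto := tendsto_measure_iInter_atTop (μ := m)
    (s := fun n : ℕ => F (b + 1 / (n + 1)))
    (fun n => (hFmeas _).nullMeasurableSet)
    (fun i j hij => F_mono_le hFmono (by
      have h1 : (i : ℝ) + 1 ≤ (j : ℝ) + 1 := by exact_mod_cast Nat.succ_le_succ hij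
      have := one_div_le_one_div_of_le (by positivity : (0:ℝ) < (i:ℝ) + 1) h1
      linarith))
    ⟨0, measure_ne_top m _⟩
  rw [hinter_good (phi F M ⁻¹' Iic b), hkey, ← hinter_good]
  exact htendsto

end phi
section maps
variable {F : ℝ → Set (EuclideanSpace ℝ (Fin N))}

lemma volF_eq (hΩf : volume Ω ≠ ⊤) (hFsub : ∀ σ, F σ ⊆ Ω)
    (hFvol : ∀ σ ∈ Icc (0:ℝ) (volume Ω).toReal, (volume (F σ)).toReal = σ)
    (hFmono : ∀ σ₁ σ₂ : ℝ, σ₁ < σ₂ → F σ₁ ⊆ F σ₂) {σ : ℝ} (hσ : 0 ≤ σ) :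
    volume (F σ) = ENNReal.ofReal (min σ ((volume Ω).toReal)) := by
  set M := (volume Ω).toReal with hM
  have hFf : ∀ τ : ℝ, volume (F τ) ≠ ⊤ := fun τ =>
    ne_top_of_le_ne_top hΩf (measure_mono (hFsub τ))
  rcases le_total σ M with h | h
  · rw [min_eq_left h, ← ENNReal.ofReal_toReal (hFf σ), hFvol σ ⟨hσ, h⟩]
  · rw [min_eq_right h]
    have hM0 : 0 ≤ M := ENNReal.toReal_nonneg
    have hFM : volume (F M) = ENNReal.ofReal M := by
      rw [← ENNReal.ofReal_toReal (hFf M), hFvol M ⟨hM0, le_rfl⟩]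
    have hΩM : volume Ω = ENNReal.ofReal M := by rw [hM, ENNReal.ofReal_toReal hΩf]
    refine le_antisymm ?_ ?_
    · rw [← hΩM]; exact measure_mono (hFsub σ)
    · rw [← hFM]; exact measure_mono (F_mono_le hFmono h)

lemma volF0 (hΩf : volume Ω ≠ ⊤) (hFsub : ∀ σ, F σ ⊆ Ω)
    (hFvol : ∀ σ ∈ Icc (0:ℝ) (volume Ω).toReal, (volume (F σ)).toReal = σ)
    (hFmono : ∀ σ₁ σ₂ : ℝ, σ₁ < σ₂ → F σ₁ ⊆ F σ₂) : volume (F 0) = 0 := by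
  rw [volF_eq hΩf hFsub hFvol hFmono le_rfl, min_eq_left ENNReal.toReal_nonneg]
  simp

lemma volFM1 (hΩm : MeasurableSet Ω) (hΩf : volume Ω ≠ ⊤) (hFmeas : ∀ σ : ℝ, MeasurableSet (F σ))
    (hFsub : ∀ σ, F σ ⊆ Ω)
    (hFvol : ∀ σ ∈ Icc (0:ℝ) (volume Ω).toReal, (volume (F σ)).toReal = σ)
    (hFmono : ∀ σ₁ σ₂ : ℝ, σ₁ < σ₂ → F σ₁ ⊆ F σ₂) :
    volume (Ω \ F ((volume Ω).toReal + 1)) = 0 := by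
  set M := (volume Ω).toReal with hM
  have hM0 : 0 ≤ M := ENNReal.toReal_nonneg
  have h1 : volume (F (M + 1)) = volume Ω := by
    rw [volF_eq hΩf hFsub hFvol hFmono (by linarith), min_eq_right (by linarith),
      ENNReal.ofReal_toReal hΩf]
  rw [measure_diff (hFsub _) (hFmeas _).nullMeasurableSet
    (ne_top_of_le_ne_top hΩf (measure_mono (hFsub _))), h1, tsub_self]

lemma map_phi_vol (hΩm : MeasurableSet Ω) (hΩf : volume Ω ≠ ⊤)
    (hFmeas : ∀ σ : ℝ, MeasurableSet (F σ)) (hFsub : ∀ σ, F σ ⊆ Ω)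
    (hFvol : ∀ σ ∈ Icc (0:ℝ) (volume Ω).toReal, (volume (F σ)).toReal = σ)
    (hFmono : ∀ σ₁ σ₂ : ℝ, σ₁ < σ₂ → F σ₁ ⊆ F σ₂) :
    Measure.map (phi F ((volume Ω).toReal)) (volume.restrict Ω)
      = volume.restrict (Ioo 0 ((volume Ω).toReal)) := by
  set M := (volume Ω).toReal with hM
  have hM0 : 0 ≤ M := ENNReal.toReal_nonneg
  have hφm : Measurable (phi F M) := measurable_phi hFmeas hFmono hM0
  have hres : IsFiniteMeasure (volume.restrict Ω) :=
    ⟨by rw [Measure.restrict_apply_univ]; exact hΩf.lt_top⟩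
  have hfin : IsFiniteMeasure (Measure.map (phi F M) (volume.restrict Ω)) :=
    ⟨by rw [Measure.map_apply hφm MeasurableSet.univ]; exact measure_lt_top _ _⟩
  refine Measure.ext_of_Iic _ _ (fun b => ?_)
  rw [Measure.map_apply hφm measurableSet_Iic, Measure.restrict_apply measurableSet_Iic]
  rcases lt_or_ge b 0 with hb | hb
  · have h1 : phi F M ⁻¹' Iic b = ∅ := by
      ext x
      simp only [mem_preimage, mem_Iic, mem_empty_iff_false, iff_false, not_le]
      exact lt_of_lt_of_le hb (phi_nonneg hM0)
    have h2 : Iic b ∩ Ioo 0 M = ∅ := by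
      ext τ
      simp only [mem_inter_iff, mem_Iic, mem_Ioo, mem_empty_iff_false, iff_false]
      rintro ⟨h3, h4, _⟩
      linarith
    rw [h1, h2]; simp
  · have hnull1 : volume.restrict Ω Ωᶜ = 0 := by
      rw [Measure.restrict_apply hΩm.compl]; simp
    have hnull2 : volume.restrict Ω (F 0) = 0 := by
      rw [Measure.restrict_apply (hFmeas 0)]
      exact measure_mono_null inter_subset_left (volF0 hΩf hFsub hFvol hFmono)
    have hnull3 : volume.restrict Ω (Ω \ F (M + 1)) = 0 := by
      rw [Measure.restrict_apply (hΩm.diff (hFmeas _))]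
      exact measure_mono_null inter_subset_left (volFM1 hΩm hΩf hFmeas hFsub hFvol hFmono)
    have htend := m_phi_Iic (Ω := Ω) (volume.restrict Ω) hFmeas hFsub hFmono hM0
      hnull1 hnull2 hnull3 hb
    have heq : ∀ n : ℕ, volume.restrict Ω (F (b + 1 / (n + 1)))
        = ENNReal.ofReal (min (b + 1 / (n + 1)) M) := by
      intro n
      rw [Measure.restrict_apply (hFmeas _), inter_eq_self_of_subset_left (hFsub _)]
      exact volF_eq hΩf hFsub hFvol hFmono (by positivity)
    have htend2 : Filter.Tendsto (fun n : ℕ => volume.restrict Ω (F (b + 1 / (n + 1))))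
        Filter.atTop (nhds (ENNReal.ofReal (min b M))) := by
      have hb' : Filter.Tendsto (fun n : ℕ => b + 1 / ((n : ℝ) + 1)) Filter.atTop (nhds b) := by
        have := (tendsto_const_nhds : Filter.Tendsto (fun _ : ℕ => b) Filter.atTop (nhds b)).add
          tendsto_one_div_add_atTop_nhds_zero_nat
        simpa using this
      have := ENNReal.tendsto_ofReal (hb'.min (tendsto_const_nhds (x := M)))
      exact Filter.Tendsto.congr (fun n => (heq n).symm) this
    rw [tendsto_nhds_unique htend htend2]
    rcases lt_or_ge b M with h | h
    · have : Iic b ∩ Ioo 0 M = Ioc 0 b := by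
        ext τ
        simp only [mem_inter_iff, mem_Iic, mem_Ioo, mem_Ioc]
        constructor
        · rintro ⟨h1, h2, _⟩; exact ⟨h2, h1⟩
        · rintro ⟨h1, h2⟩; exact ⟨h2, h1, lt_of_le_of_lt h2 h⟩
      rw [this, Real.volume_Ioc, sub_zero, min_eq_left h.le]
    · have : Iic b ∩ Ioo 0 M = Ioo 0 M := by
        ext τ
        simp only [mem_inter_iff, mem_Iic, mem_Ioo]
        constructor
        · rintro ⟨_, h2⟩; exact h2
        · rintro ⟨h1, h2⟩; exact ⟨le_trans h2.le h, h1, h2⟩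
      rw [this, Real.volume_Ioo, sub_zero, min_eq_right h]

end maps
section kappa
variable {F : ℝ → Set (EuclideanSpace ℝ (Fin N))}

lemma G_monotone {s K : ℝ} (hΩm : MeasurableSet Ω) (hg : Measurable g) (hΩf : volume Ω ≠ ⊤)
    (hs : 1 < s) (hK : 0 ≤ K) (hMarc : ∀ t > (0 : ℝ), t ^ (1 / s) * rearr Ω g t ≤ K)
    (hFsub : ∀ σ, F σ ⊆ Ω) (hFmono : ∀ σ₁ σ₂ : ℝ, σ₁ < σ₂ → F σ₁ ⊆ F σ₂) :
    Monotone (fun τ : ℝ => ∫ x in F τ, |g x|) := by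
  intro a b hab
  exact setIntegral_mono_set ((abs_g_integrableOn hΩm hg hΩf hs hK hMarc).mono_set (hFsub b))
    (Filter.Eventually.of_forall fun x => abs_nonneg _)
    (HasSubset.Subset.eventuallyLE (F_mono_le hFmono hab))

lemma map_phi_kappa {s K : ℝ} (hΩm : MeasurableSet Ω) (hg : Measurable g) (hΩf : volume Ω ≠ ⊤)
    (hs : 1 < s) (hK : 0 ≤ K) (hMarc : ∀ t > (0 : ℝ), t ^ (1 / s) * rearr Ω g t ≤ K)
    (hFmeas : ∀ σ : ℝ, MeasurableSet (F σ)) (hFsub : ∀ σ, F σ ⊆ Ω)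
    (hFvol : ∀ σ ∈ Icc (0:ℝ) (volume Ω).toReal, (volume (F σ)).toReal = σ)
    (hFmono : ∀ σ₁ σ₂ : ℝ, σ₁ < σ₂ → F σ₁ ⊆ F σ₂)
    (hG : Monotone (fun τ : ℝ => ∫ x in F τ, |g x|)) :
    Measure.map (phi F ((volume Ω).toReal))
        ((volume.restrict Ω).withDensity (fun x => ENNReal.ofReal |g x|))
      = hG.stieltjesFunction.measure := by
  set M := (volume Ω).toReal with hM
  set κ := (volume.restrict Ω).withDensity (fun x => ENNReal.ofReal |g x|) with hκ
  have hM0 : 0 ≤ M := ENNReal.toReal_nonneg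
  have hφm : Measurable (phi F M) := measurable_phi hFmeas hFmono hM0
  have habs := abs_g_integrableOn hΩm hg hΩf hs hK hMarc
  have hκF : ∀ σ : ℝ, κ (F σ) = ENNReal.ofReal (∫ x in F σ, |g x|) := by
    intro σ
    rw [hκ, withDensity_apply _ (hFmeas σ), Measure.restrict_restrict (hFmeas σ),
      inter_eq_self_of_subset_left (hFsub σ)]
    exact (ofReal_integral_eq_lintegral_ofReal (habs.mono_set (hFsub σ))
      (Filter.Eventually.of_forall fun x => abs_nonneg _)).symm
  have hG0 : ∀ σ : ℝ, σ ≤ 0 → (∫ x in F σ, |g x|) = 0 := by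
    intro σ hσ
    have hnull : volume (F σ) = 0 :=
      measure_mono_null (F_mono_le hFmono hσ) (volF0 hΩf hFsub hFvol hFmono)
    rw [Measure.restrict_eq_zero.mpr hnull, integral_zero_measure]
  have hf0 : ∀ b : ℝ, b < 0 → hG.stieltjesFunction b = 0 := by
    intro b hb
    have h1 : hG.stieltjesFunction b ≤ (fun τ : ℝ => ∫ x in F τ, |g x|) (b / 2) := by
      rw [Monotone.stieltjesFunction_eq]
      exact hG.rightLim_le (by linarith)
    have h2 : (fun τ : ℝ => ∫ x in F τ, |g x|) b ≤ hG.stieltjesFunction b := by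
      rw [Monotone.stieltjesFunction_eq]
      exact hG.le_rightLim le_rfl
    simp only [hG0 b hb.le, hG0 (b/2) (by linarith)] at h1 h2
    linarith
  have hatBot : Filter.Tendsto (⇑hG.stieltjesFunction) Filter.atBot (nhds 0) := by
    apply Filter.Tendsto.congr' _ (tendsto_const_nhds (x := (0:ℝ)))
    exact Filter.eventually_atBot.2 ⟨-1, fun b hb => (hf0 b (by linarith)).symm⟩
  have hκfin : IsFiniteMeasure κ := by
    constructor
    rw [hκ, withDensity_apply _ MeasurableSet.univ, Measure.restrict_univ]
    exact (hasFiniteIntegral_iff_ofReal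
      (Filter.Eventually.of_forall fun x => abs_nonneg _)).1 habs.2
  have hmapfin : IsFiniteMeasure (Measure.map (phi F M) κ) :=
    ⟨by rw [Measure.map_apply hφm MeasurableSet.univ]; exact measure_lt_top _ _⟩
  have hAC : κ ≪ volume.restrict Ω := withDensity_absolutelyContinuous _ _
  refine Measure.ext_of_Iic _ _ (fun b => ?_)
  rw [Measure.map_apply hφm measurableSet_Iic,
    StieltjesFunction.measure_Iic _ hatBot b, sub_zero]
  rcases lt_or_ge b 0 with hb | hb
  · have h1 : phi F M ⁻¹' Iic b = ∅ := by
      ext x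
      simp only [mem_preimage, mem_Iic, mem_empty_iff_false, iff_false, not_le]
      exact lt_of_lt_of_le hb (phi_nonneg hM0)
    rw [h1, hf0 b hb]
    simp
  · have hnull1 : κ Ωᶜ = 0 := hAC (by rw [Measure.restrict_apply hΩm.compl]; simp)
    have hnull2 : κ (F 0) = 0 := hAC (by
      rw [Measure.restrict_apply (hFmeas 0)]
      exact measure_mono_null inter_subset_left (volF0 hΩf hFsub hFvol hFmono))
    have hnull3 : κ (Ω \ F (M + 1)) = 0 := hAC (by
      rw [Measure.restrict_apply (hΩm.diff (hFmeas _))]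
      exact measure_mono_null inter_subset_left (volFM1 hΩm hΩf hFmeas hFsub hFvol hFmono))
    have htend := m_phi_Iic (Ω := Ω) κ hFmeas hFsub hFmono hM0 hnull1 hnull2 hnull3 hb
    have hseq : Filter.Tendsto (fun n : ℕ => b + 1 / ((n : ℝ) + 1)) Filter.atTop
        (nhdsWithin b (Ioi b)) := by
      apply tendsto_nhdsWithin_of_tendsto_nhds_of_eventually_within
      · have := (tendsto_const_nhds : Filter.Tendsto (fun _ : ℕ => b) Filter.atTop (nhds b)).add
          tendsto_one_div_add_atTop_nhds_zero_nat
        simpa using this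
      · refine Filter.Eventually.of_forall fun n => ?_
        simp only [mem_Ioi]
        have : (0:ℝ) < 1 / ((n:ℝ) + 1) := by positivity
        linarith
    have hGlim := (hG.tendsto_rightLim b).comp hseq
    have htend2 : Filter.Tendsto (fun n : ℕ => κ (F (b + 1 / (n + 1)))) Filter.atTop
        (nhds (ENNReal.ofReal (hG.stieltjesFunction b))) := by
      rw [Monotone.stieltjesFunction_eq]
      exact Filter.Tendsto.congr (fun n => (hκF _).symm) (ENNReal.tendsto_ofReal hGlim)
    exact tendsto_nhds_unique htend htend2

end kappa
lemma part2 {s K t : ℝ} (hΩm : MeasurableSet Ω) (hg : Measurable g) (hΩf : volume Ω ≠ ⊤)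
    (hs : 1 < s) (hK : 0 ≤ K) (hMarc : ∀ u > (0 : ℝ), u ^ (1 / s) * rearr Ω g u ≤ K)
    (ht : 0 < t) :
    (1 / t) * (∫ τ in (0:ℝ)..t, rearr Ω g τ) ≤ K * (s / (s - 1)) * t ^ (-(1 / s)) := by
  have hs0 : (0:ℝ) < s := by linarith
  have hexp : -1 < -(1/s) := by
    have : 1 / s < 1 := by rw [div_lt_one hs0]; linarith
    linarith
  have hKi : IntegrableOn (fun τ : ℝ => K * τ ^ (-(1/s))) (Ioc 0 t) :=
    ((intervalIntegral.intervalIntegrable_rpow' hexp (a := 0) (b := t)).const_mul K).1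
  have hint : (∫ τ in (0:ℝ)..t, rearr Ω g τ) ≤ ∫ τ in (0:ℝ)..t, K * τ ^ (-(1/s)) := by
    rw [intervalIntegral.integral_of_le ht.le, intervalIntegral.integral_of_le ht.le]
    apply setIntegral_mono_on (rearr_integrableOn hΩm hg hΩf hs hK hMarc t) hKi
      measurableSet_Ioc
    intro τ hτ
    exact rearr_le_K hs hK hMarc hτ.1
  have hval : (∫ τ in (0:ℝ)..t, K * τ ^ (-(1/s)))
      = K * (t ^ (1 - 1/s) / (1 - 1/s)) := by
    rw [intervalIntegral.integral_const_mul, integral_rpow (Or.inl hexp)]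
    rw [Real.zero_rpow (by linarith : -(1/s) + 1 ≠ 0)]
    ring_nf
  have h1s : (0:ℝ) < 1 - 1/s := by
    have : 1 / s < 1 := by rw [div_lt_one hs0]; linarith
    linarith
  have hpow : t ^ (1 - 1/s) = t * t ^ (-(1/s)) := by
    have : (1:ℝ) - 1/s = 1 + (-(1/s)) := by ring
    rw [this, Real.rpow_add ht, Real.rpow_one]
  have hchain : (1/t) * (∫ τ in (0:ℝ)..t, rearr Ω g τ)
      ≤ (1/t) * (K * (t ^ (1 - 1/s) / (1 - 1/s))) := by
    apply mul_le_mul_of_nonneg_left _ (by positivity)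
    rw [← hval]; exact hint
  refine hchain.trans (le_of_eq ?_)
  rw [hpow]
  have hs1 : s - 1 ≠ 0 := by linarith
  field_simp
end aux

/-- If `g` is in the Marcinkiewicz space `M^s`, so is its pseudo-rearrangement `D`,
with `D̄(t) ≤ (1/t)∫₀ᵗ ḡ ≤ ‖g‖_{M^s}·(s/(s−1))·t^{−1/s}`. -/
theorem stmt_8 {N : ℕ} (Ω : Set (EuclideanSpace ℝ (Fin N)))
    (hΩm : MeasurableSet Ω) (hΩb : Bornology.IsBounded Ω)
    (v : EuclideanSpace ℝ (Fin N) → ℝ) (hv : Measurable v)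
    (g : EuclideanSpace ℝ (Fin N) → ℝ) (hgmeas : Measurable g)
    (s : ℝ) (hs : 1 < s)
    (K : ℝ) (hK : 0 ≤ K)
    (hMarc : ∀ t > (0 : ℝ), t ^ (1 / s) * rearr Ω g t ≤ K)
    (F : ℝ → Set (EuclideanSpace ℝ (Fin N)))
    (hFmeas : ∀ σ, MeasurableSet (F σ))
    (hFsub : ∀ σ, F σ ⊆ Ω)
    (hFvol : ∀ σ ∈ Icc (0 : ℝ) (volume Ω).toReal, (volume (F σ)).toReal = σ)
    (hFmono : ∀ σ₁ σ₂, σ₁ < σ₂ → F σ₁ ⊆ F σ₂)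
    (D : ℝ → ℝ)
    (hD : ∀ᵐ σ ∂(volume.restrict (Ioo (0 : ℝ) (volume Ω).toReal)),
      HasDerivAt (fun τ => ∫ x in F τ, |g x|) (D σ) σ) :
    ∀ t ∈ Ioo (0 : ℝ) (volume Ω).toReal,
      rearr1 (volume Ω).toReal D t ≤ (1 / t) * (∫ τ in (0 : ℝ)..t, rearr Ω g τ) ∧
      (1 / t) * (∫ τ in (0 : ℝ)..t, rearr Ω g τ)
        ≤ K * (s / (s - 1)) * t ^ (-(1 / s)) := by
  intro t ht
  obtain ⟨ht0, htM⟩ := ht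
  have hΩf : volume Ω ≠ ⊤ := hΩb.measure_lt_top.ne
  set M := (volume Ω).toReal with hMdef
  have hM0 : (0:ℝ) ≤ M := ENNReal.toReal_nonneg
  refine ⟨?_, part2 hΩm hgmeas hΩf hs hK hMarc ht0⟩
  -- notation
  set A := (1 / t) * (∫ τ in (0 : ℝ)..t, rearr Ω g τ) with hA
  have hrint : ∀ b : ℝ, IntegrableOn (rearr Ω g) (Ioc 0 b) :=
    rearr_integrableOn hΩm hgmeas hΩf hs hK hMarc
  have hA0 : 0 ≤ A := by
    apply mul_nonneg (by positivity)
    exact intervalIntegral.integral_nonneg ht0.le (fun u _ => rearr_nonneg Ω g u)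
  have hG : Monotone (fun τ : ℝ => ∫ x in F τ, |g x|) :=
    G_monotone hΩm hgmeas hΩf hs hK hMarc hFsub hFmono
  set ν := hG.stieltjesFunction.measure with hν
  set d : ℝ → ℝ := fun σ => (Measure.rnDeriv ν volume σ).toReal with hd_def
  have hd : ∀ᵐ σ ∂(volume : Measure ℝ),
      HasDerivAt (fun τ : ℝ => ∫ x in F τ, |g x|) (d σ) σ := hG.ae_hasDerivAt
  have hDd : ∀ᵐ σ ∂(volume : Measure ℝ), σ ∈ Ioo (0:ℝ) M → D σ = d σ := by
    rw [← ae_restrict_iff' measurableSet_Ioo]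
    filter_upwards [hD, ae_restrict_of_ae hd] with σ h1 h2 using h1.unique h2
  have hd_meas : Measurable d := (Measure.measurable_rnDeriv ν volume).ennreal_toReal
  set T := Ioo (0:ℝ) M ∩ {σ | A < d σ} with hT
  have hTm : MeasurableSet T :=
    measurableSet_Ioo.inter (measurableSet_lt measurable_const hd_meas)
  have hTsub : T ⊆ Ioo 0 M := inter_subset_left
  have hcongr : volume {σ | σ ∈ Ioo (0:ℝ) M ∧ |D σ| > A} = volume T := by
    apply measure_congr
    apply Filter.eventuallyEq_set.2
    filter_upwards [hDd] with σ hσ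
    by_cases hσIoo : σ ∈ Ioo (0:ℝ) M
    · simp only [mem_setOf_eq, hT, mem_inter_iff, hσIoo, true_and]
      rw [hσ hσIoo, abs_of_nonneg (ENNReal.toReal_nonneg)]
    · simp only [mem_setOf_eq, hT, mem_inter_iff, hσIoo, false_and]
  have hTf : volume T ≠ ⊤ := by
    apply ne_top_of_le_ne_top _ (measure_mono hTsub)
    rw [Real.volume_Ioo]
    exact ENNReal.ofReal_ne_top
  -- main claim
  have hclaim : (volume T).toReal < t := by
    by_contra hcon
    push_neg at hcon
    set e := (volume T).toReal with he_def
    have hvolT : volume T = ENNReal.ofReal e := (ENNReal.ofReal_toReal hTf).symm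
    have hφm : Measurable (phi F M) := measurable_phi hFmeas hFmono hM0
    have hmapvol := map_phi_vol hΩm hΩf hFmeas hFsub hFvol hFmono
    have hmapκ := map_phi_kappa hΩm hgmeas hΩf hs hK hMarc hFmeas hFsub hFvol hFmono hG
    rw [← hMdef] at hmapvol hmapκ
    set κ := (volume.restrict Ω).withDensity (fun x => ENNReal.ofReal |g x|) with hκ
    set S := phi F M ⁻¹' T ∩ Ω with hS
    have hSm : MeasurableSet S := (hφm hTm).inter hΩm
    have hSvol : volume S = volume T := by
      have h1 : Measure.map (phi F M) (volume.restrict Ω) T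
          = volume.restrict (Ioo 0 M) T := by rw [hmapvol]
      rwa [Measure.map_apply hφm hTm, Measure.restrict_apply hTm,
        inter_eq_self_of_subset_left hTsub, Measure.restrict_apply' hΩm] at h1
    have hνT : ν T = ∫⁻ x in S, ENNReal.ofReal |g x| ∂volume := by
      rw [hν, ← hmapκ, Measure.map_apply hφm hTm, hκ, withDensity_apply _ (hφm hTm),
        Measure.restrict_restrict (hφm hTm)]
    have hHL : ν T ≤ ENNReal.ofReal (∫ τ in (0:ℝ)..e, rearr Ω g τ) := by
      rw [hνT]
      have := HL hΩm hgmeas hΩf hs hK hMarc hSm inter_subset_right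
      rwa [hSvol, ← he_def] at this
    -- the rearranged-integral bound: ∫₀^e ḡ ≤ e * A
    have hte : t ≤ e := hcon
    have hii1 : IntervalIntegrable (rearr Ω g) volume 0 t :=
      (intervalIntegrable_iff_integrableOn_Ioc_of_le ht0.le).2 (hrint t)
    have hii2 : IntervalIntegrable (rearr Ω g) volume t e := by
      refine (intervalIntegrable_iff_integrableOn_Ioc_of_le hte).2 ?_
      exact (hrint e).mono_set (Ioc_subset_Ioc ht0.le le_rfl)
    have hgt_le_A : rearr Ω g t ≤ A := by
      have h1 : rearr Ω g t * t ≤ ∫ τ in (0:ℝ)..t, rearr Ω g τ := by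
        rw [intervalIntegral.integral_of_le ht0.le]
        have h2 : ∫ _ in Ioc (0:ℝ) t, rearr Ω g t = (rearr Ω g t) * t := by
          rw [setIntegral_const, Real.volume_real_Ioc_of_le ht0.le, sub_zero,
            smul_eq_mul, mul_comm]
        rw [← h2]
        apply setIntegral_mono_on (integrableOn_const (by
          rw [Real.volume_Ioc]; exact ENNReal.ofReal_ne_top)) (hrint t) measurableSet_Ioc
        intro τ hτ
        exact rearr_antitoneOn hΩm hgmeas hΩf hτ.1 ht0 hτ.2
      calc rearr Ω g t = (1/t) * (rearr Ω g t * t) := by field_simp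
        _ ≤ (1/t) * (∫ τ in (0:ℝ)..t, rearr Ω g τ) :=
            mul_le_mul_of_nonneg_left h1 (by positivity)
        _ = A := rfl
    have hinte_le : (∫ τ in (0:ℝ)..e, rearr Ω g τ) ≤ e * A := by
      have hsplit : (∫ τ in (0:ℝ)..e, rearr Ω g τ)
          = (∫ τ in (0:ℝ)..t, rearr Ω g τ) + ∫ τ in t..e, rearr Ω g τ :=
        (intervalIntegral.integral_add_adjacent_intervals hii1 hii2).symm
      have h2 : (∫ τ in t..e, rearr Ω g τ) ≤ (e - t) * rearr Ω g t := by
        rw [intervalIntegral.integral_of_le hte]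
        have h3 : ∫ _ in Ioc t e, rearr Ω g t = (e - t) * rearr Ω g t := by
          rw [setIntegral_const, Real.volume_real_Ioc_of_le hte,
            smul_eq_mul]
        rw [← h3]
        apply setIntegral_mono_on ((hrint e).mono_set (Ioc_subset_Ioc ht0.le le_rfl))
          (integrableOn_const (by rw [Real.volume_Ioc]; exact ENNReal.ofReal_ne_top))
          measurableSet_Ioc
        intro τ hτ
        exact rearr_antitoneOn hΩm hgmeas hΩf ht0 (lt_trans ht0 hτ.1) hτ.1.le
      have h4 : (∫ τ in (0:ℝ)..t, rearr Ω g τ) = t * A := by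
        rw [hA]; field_simp
      have h5 : (e - t) * rearr Ω g t ≤ (e - t) * A :=
        mul_le_mul_of_nonneg_left hgt_le_A (by linarith)
      rw [hsplit, h4]
      nlinarith
    -- lower bound via the Radon-Nikodym derivative
    have hrnT : ∫⁻ σ in T, Measure.rnDeriv ν volume σ ∂volume ≤ ν T :=
      Measure.setLIntegral_rnDeriv_le T
    set Tn : ℕ → Set ℝ := fun n => Ioo (0:ℝ) M ∩ {σ | A + 1/(n+1) ≤ d σ} with hTn
    have hTnm : ∀ n, MeasurableSet (Tn n) := fun n =>
      measurableSet_Ioo.inter (measurableSet_le measurable_const hd_meas)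
    have hTnsub : ∀ n, Tn n ⊆ T := by
      rintro n σ ⟨h1, h2⟩
      refine ⟨h1, ?_⟩
      show A < d σ
      refine lt_of_lt_of_le ?_ h2
      simp only [lt_add_iff_pos_right]
      positivity
    have hTne : volume T ≠ 0 := by
      intro h0
      have he0 : e = 0 := by rw [he_def, h0, ENNReal.toReal_zero]
      linarith
    have hTunion : T = ⋃ n, Tn n := by
      ext σ
      simp only [mem_iUnion, hTn, hT, mem_inter_iff, mem_setOf_eq]
      constructor
      · rintro ⟨h1, h2⟩
        obtain ⟨n, hn⟩ := exists_nat_one_div_lt (sub_pos.2 h2)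
        exact ⟨n, h1, by linarith⟩
      · rintro ⟨n, h1, h2⟩
        refine ⟨h1, lt_of_lt_of_le ?_ h2⟩
        simp only [lt_add_iff_pos_right]
        positivity
    obtain ⟨n, hn⟩ : ∃ n, volume (Tn n) ≠ 0 := by
      by_contra hall
      push_neg at hall
      exact hTne (by rw [hTunion]; exact measure_iUnion_null hall)
    -- pointwise bounds
    have hlow1 : ENNReal.ofReal (A + 1/(n+1)) * volume (Tn n)
        ≤ ∫⁻ σ in Tn n, Measure.rnDeriv ν volume σ ∂volume := by
      rw [← setLIntegral_const]
      apply setLIntegral_mono (Measure.measurable_rnDeriv ν volume)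
      intro σ hσ
      rcases eq_or_ne (Measure.rnDeriv ν volume σ) ⊤ with htop | htop
      · rw [htop]; exact le_top
      · rw [← ENNReal.ofReal_toReal htop]
        exact ENNReal.ofReal_le_ofReal hσ.2
    have hlow2 : ENNReal.ofReal A * volume (T \ Tn n)
        ≤ ∫⁻ σ in T \ Tn n, Measure.rnDeriv ν volume σ ∂volume := by
      rw [← setLIntegral_const]
      apply setLIntegral_mono (Measure.measurable_rnDeriv ν volume)
      intro σ hσ
      rcases eq_or_ne (Measure.rnDeriv ν volume σ) ⊤ with htop | htop
      · rw [htop]; exact le_top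
      · rw [← ENNReal.ofReal_toReal htop]
        exact ENNReal.ofReal_le_ofReal (hσ.1.2).le
    have hsplitT : ∫⁻ σ in T, Measure.rnDeriv ν volume σ ∂volume
        = (∫⁻ σ in Tn n, Measure.rnDeriv ν volume σ ∂volume)
          + ∫⁻ σ in T \ Tn n, Measure.rnDeriv ν volume σ ∂volume := by
      rw [← lintegral_union (hTm.diff (hTnm n)) disjoint_sdiff_self_right,
        union_diff_cancel (hTnsub n)]
    have hmeasadd : volume (Tn n) + volume (T \ Tn n) = volume T := by
      have := measure_add_diff (μ := (volume : Measure ℝ)) (hTnm n).nullMeasurableSet T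
      rwa [union_eq_self_of_subset_left (hTnsub n)] at this
    -- assemble the contradiction
    have hchain : ENNReal.ofReal A * volume T + ENNReal.ofReal (1/(n+1)) * volume (Tn n)
        ≤ ENNReal.ofReal A * volume T := by
      calc ENNReal.ofReal A * volume T + ENNReal.ofReal (1/(n+1)) * volume (Tn n)
          = ENNReal.ofReal (A + 1/(n+1)) * volume (Tn n)
            + ENNReal.ofReal A * volume (T \ Tn n) := by
            rw [ENNReal.ofReal_add hA0 (by positivity), ← hmeasadd]
            ring
        _ ≤ (∫⁻ σ in Tn n, Measure.rnDeriv ν volume σ ∂volume)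
            + ∫⁻ σ in T \ Tn n, Measure.rnDeriv ν volume σ ∂volume := add_le_add hlow1 hlow2
        _ = ∫⁻ σ in T, Measure.rnDeriv ν volume σ ∂volume := hsplitT.symm
        _ ≤ ν T := hrnT
        _ ≤ ENNReal.ofReal (∫ τ in (0:ℝ)..e, rearr Ω g τ) := hHL
        _ ≤ ENNReal.ofReal (e * A) := ENNReal.ofReal_le_ofReal hinte_le
        _ = ENNReal.ofReal A * volume T := by
            rw [hvolT, ← ENNReal.ofReal_mul hA0, mul_comm]
    have hXfin : ENNReal.ofReal A * volume T ≠ ⊤ := ENNReal.mul_ne_top ENNReal.ofReal_ne_top hTf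
    have hzero : ENNReal.ofReal (1/(n+1)) * volume (Tn n) = 0 := by
      have h0 : ENNReal.ofReal A * volume T + ENNReal.ofReal (1/(n+1)) * volume (Tn n)
          ≤ ENNReal.ofReal A * volume T + 0 := by rw [add_zero]; exact hchain
      exact le_antisymm (ENNReal.le_of_add_le_add_left hXfin h0) zero_le
    rw [mul_eq_zero] at hzero
    rcases hzero with h | h
    · rw [ENNReal.ofReal_eq_zero] at h
      have : (0:ℝ) < 1/((n:ℝ)+1) := by positivity
      linarith
    · exact hn h
  -- conclude
  unfold rearr1
  apply csInf_le ⟨0, fun τ hτ => hτ.1⟩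
  refine ⟨hA0, ?_⟩
  have hsets : {σ | σ ∈ Ioo (0:ℝ) M ∧ |D σ| > A} = {s ∈ Ioo (0:ℝ) M | |D s| > A} := rfl
  rw [← hsets, hcongr]
  exact hclaim
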